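/- For the cycle graph Circ_n on n ≥ 3 vertices, the number of κ-equivalence classes of acyclic orientations equals n − 1, i.e., κ(Circ_n) = n − 1. -/

import Mathlib

/-- An orientation of a simple graph: a choice of direction for each edge. -/
structure GraphOrientation {V : Type*} (G : SimpleGraph V) where
  dir : V → V → Prop
  consistent : ∀ u v, G.Adj u v ↔ (dir u v ∨ dir v u)
  asymm : ∀ u v, dir u v → ¬ dir v u

/-- An orientation is acyclic if its directed graph has no directed cycle. -/
def GraphOrientation.IsAcyclic {V : Type*} {G : SimpleGraph V} (O : GraphOrientation G) : Prop :=
  ∀ v, ¬ Relation.TransGen O.dir v v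

/-- The type of acyclic orientations of `G`. -/
def AcycGraphOrientation {V : Type*} (G : SimpleGraph V) := {O : GraphOrientation G // O.IsAcyclic}

/-- `Click O O'` holds when `O'` is obtained from `O` by a source-to-sink operation:
reversing all edges incident to some source vertex `v`. -/
def Click {V : Type*} {G : SimpleGraph V} (O O' : GraphOrientation G) : Prop :=
  ∃ v, (∀ u, ¬ O.dir u v) ∧
    ∀ u w, O'.dir u w ↔ (((u = v ∨ w = v) ∧ O.dir w u) ∨ (u ≠ v ∧ w ≠ v ∧ O.dir u w))

/-- κ(G): the number of equivalence classes of acyclic orientations of `G` under the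
equivalence generated by source-to-sink operations. -/
noncomputable def kappa {V : Type*} (G : SimpleGraph V) : ℕ :=
  Nat.card (Quot (fun A B : AcycGraphOrientation G => Click A.1 B.1))

namespace KappaCycleAux

open SimpleGraph Finset
open scoped Fin.NatCast Fin.CommRing

lemma orientation_ext {V : Type*} {G : SimpleGraph V} {O O' : GraphOrientation G}
    (h : ∀ u v, O.dir u v ↔ O'.dir u v) : O = O' := by
  cases O with
  | mk d c a =>
    cases O' with
    | mk d' c' a' =>
      have : d = d' := funext fun u => funext fun v => propext (h u v)
      subst this
      rfl

variable {n : ℕ} [NeZero n]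

lemma fin_one_ne_zero (hn : 3 ≤ n) : (1 : Fin n) ≠ 0 := by
  intro h
  rw [← Nat.cast_one, Fin.natCast_eq_zero] at h
  exact absurd (Nat.le_of_dvd one_pos h) (by omega)

lemma fin_add_one_ne (hn : 3 ≤ n) (u : Fin n) : u + 1 ≠ u := by
  intro h
  exact fin_one_ne_zero hn (by linear_combination (h : u + 1 = u))

lemma fin_add_two_ne (hn : 3 ≤ n) (u : Fin n) : u + 1 + 1 ≠ u := by
  intro h
  have h2 : ((2 : ℕ) : Fin n) = 0 := by
    rw [Nat.cast_ofNat]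
    linear_combination (h : u + 1 + 1 = u)
  rw [Fin.natCast_eq_zero] at h2
  exact absurd (Nat.le_of_dvd (by norm_num) h2) (by omega)

lemma adj_iff (hn : 3 ≤ n) {u v : Fin n} :
    (cycleGraph n).Adj u v ↔ (v = u + 1 ∨ u = v + 1) := by
  rw [cycleGraph_adj']
  have h1 : ((1 : Fin n)).val = 1 := by
    rw [Fin.val_one', Nat.mod_eq_of_lt (by omega : 1 < n)]
  constructor
  · rintro (h | h)
    · right
      have : u - v = 1 := Fin.ext (by rw [h, h1])
      linear_combination this
    · left
      have : v - u = 1 := Fin.ext (by rw [h, h1])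
      linear_combination this
  · rintro (h | h)
    · right
      have : v - u = 1 := by rw [h]; ring
      rw [this, h1]
    · left
      have : u - v = 1 := by rw [h]; ring
      rw [this, h1]

lemma adj_succ (hn : 3 ≤ n) (u : Fin n) : (cycleGraph n).Adj u (u + 1) :=
  (adj_iff hn).mpr (Or.inl rfl)

/-- The set of "clockwise" edges of an orientation of the cycle graph. -/
noncomputable def SOf (O : GraphOrientation (cycleGraph n)) : Finset (Fin n) :=
  @Finset.filter _ (fun i => O.dir i (i + 1)) (Classical.decPred _) Finset.univ

lemma mem_SOf {O : GraphOrientation (cycleGraph n)} {i : Fin n} :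
    i ∈ SOf O ↔ O.dir i (i + 1) := by
  simp [SOf]

/-- The orientation of the cycle graph determined by a set of clockwise edges. -/
def ofS (hn : 3 ≤ n) (S : Finset (Fin n)) : GraphOrientation (cycleGraph n) where
  dir u w := (w = u + 1 ∧ u ∈ S) ∨ (u = w + 1 ∧ w ∉ S)
  consistent u v := by
    rw [adj_iff hn]
    by_cases hu : u ∈ S <;> by_cases hv : v ∈ S <;> tauto
  asymm u v h h' := by
    rcases h with ⟨h1, h2⟩ | ⟨h1, h2⟩ <;> rcases h' with ⟨h1', h2'⟩ | ⟨h1', h2'⟩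
    · exact fin_add_two_ne hn u (by rw [← h1]; exact h1'.symm)
    · exact h2' h2
    · exact h2 h2'
    · exact fin_add_two_ne hn v (by rw [← h1]; exact h1'.symm)

lemma ofS_dir (hn : 3 ≤ n) (S : Finset (Fin n)) (u w : Fin n) :
    (ofS hn S).dir u w ↔ (w = u + 1 ∧ u ∈ S) ∨ (u = w + 1 ∧ w ∉ S) := Iff.rfl

lemma SOf_ofS (hn : 3 ≤ n) (S : Finset (Fin n)) : SOf (ofS hn S) = S := by
  ext i
  rw [mem_SOf, ofS_dir]
  constructor
  · rintro (⟨-, h⟩ | ⟨h, -⟩)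
    · exact h
    · exact absurd h.symm (fin_add_two_ne hn i)
  · exact fun h => Or.inl ⟨rfl, h⟩

lemma eq_ofS_SOf (hn : 3 ≤ n) (O : GraphOrientation (cycleGraph n)) :
    O = ofS hn (SOf O) := by
  apply orientation_ext
  intro u w
  rw [ofS_dir, mem_SOf, mem_SOf]
  constructor
  · intro h
    have hadj := (O.consistent u w).mpr (Or.inl h)
    rcases (adj_iff hn).mp hadj with h1 | h1
    · left; exact ⟨h1, h1 ▸ h⟩
    · right
      refine ⟨h1, fun h2 => ?_⟩
      rw [← h1] at h2
      exact O.asymm u w h h2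
  · rintro (⟨h1, h2⟩ | ⟨h1, h2⟩)
    · exact h1 ▸ h2
    · have hadj : (cycleGraph n).Adj u w := (adj_iff hn).mpr (Or.inr h1)
      rcases (O.consistent u w).mp hadj with h | h
      · exact h
      · exact absurd (h1 ▸ h) h2

/-- Any directed path in `ofS S` is monotone: either all edges clockwise or all
counterclockwise. -/
lemma dir_path (hn : 3 ≤ n) (S : Finset (Fin n)) (a b : Fin n)
    (h : Relation.TransGen (ofS hn S).dir a b) :
    (∃ k : ℕ, 0 < k ∧ b = a + (k : Fin n) ∧ ∀ j < k, a + (j : Fin n) ∈ S) ∨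
    (∃ k : ℕ, 0 < k ∧ a = b + (k : Fin n) ∧ ∀ j < k, b + (j : Fin n) ∉ S) := by
  induction h with
  | single h =>
    rcases h with ⟨h1, h2⟩ | ⟨h1, h2⟩
    · left
      exact ⟨1, one_pos, by rw [Nat.cast_one]; exact h1, by
        intro j hj
        interval_cases j
        simpa using h2⟩
    · right
      exact ⟨1, one_pos, by rw [Nat.cast_one]; exact h1, by
        intro j hj
        interval_cases j
        simpa using h2⟩
  | @tail b c hab hbc ih =>
    rcases ih with ⟨k, hk, hb, hall⟩ | ⟨k, hk, hb, hall⟩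
    · rcases hbc with ⟨h1, h2⟩ | ⟨h1, h2⟩
      · -- continue clockwise
        left
        refine ⟨k + 1, Nat.succ_pos k, ?_, ?_⟩
        · rw [h1, hb]; push_cast; ring
        · intro j hj
          rcases Nat.lt_succ_iff_lt_or_eq.mp hj with hj | hj
          · exact hall j hj
          · subst hj; rw [← hb]; exact h2
      · -- a clockwise path followed by a counterclockwise step: contradiction
        exfalso
        have hc : c = a + ((k - 1 : ℕ) : Fin n) := by
          have hkk : ((k : ℕ) : Fin n) = ((k - 1 : ℕ) : Fin n) + 1 := by
            conv_lhs => rw [show k = (k - 1) + 1 by omega]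
            push_cast; ring
          linear_combination hkk - (hb.symm.trans h1)
        exact h2 (hc ▸ hall (k - 1) (by omega))
    · rcases hbc with ⟨h1, h2⟩ | ⟨h1, h2⟩
      · -- counterclockwise path followed by clockwise step: contradiction
        exfalso
        have : b + ((0 : ℕ) : Fin n) = b := by push_cast; ring
        exact (this ▸ hall 0 hk) h2
      · -- continue counterclockwise
        right
        refine ⟨k + 1, Nat.succ_pos k, ?_, ?_⟩
        · rw [hb, h1]; push_cast; ring
        · intro j hj
          match j with
          | 0 => simpa using h2
          | (m + 1) =>
            have : c + ((m + 1 : ℕ) : Fin n) = b + ((m : ℕ) : Fin n) := by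
              rw [h1]; push_cast; ring
            rw [this]
            exact hall m (by omega)

lemma acyclic_ofS (hn : 3 ≤ n) (S : Finset (Fin n)) (h1 : S.Nonempty) (h2 : S ≠ univ) :
    (ofS hn S).IsAcyclic := by
  intro a hcyc
  rcases dir_path hn S a a hcyc with ⟨k, hk, hb, hall⟩ | ⟨k, hk, hb, hall⟩
  · apply h2
    have hdvd : n ∣ k := by
      rw [← Fin.natCast_eq_zero]
      linear_combination hb.symm
    have hnk : n ≤ k := Nat.le_of_dvd hk hdvd
    rw [Finset.eq_univ_iff_forall]
    intro i
    have := hall (i - a).val (lt_of_lt_of_le (i - a).isLt hnk)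
    rwa [Fin.cast_val_eq_self, add_sub_cancel] at this
  · obtain ⟨x, hx⟩ := h1
    have hdvd : n ∣ k := by
      rw [← Fin.natCast_eq_zero]
      linear_combination hb.symm
    have hnk : n ≤ k := Nat.le_of_dvd hk hdvd
    have := hall (x - a).val (lt_of_lt_of_le (x - a).isLt hnk)
    rw [Fin.cast_val_eq_self, add_sub_cancel] at this
    exact this hx

lemma acyclic_nontrivial (hn : 3 ≤ n) (O : GraphOrientation (cycleGraph n))
    (hO : O.IsAcyclic) : (SOf O).Nonempty ∧ SOf O ≠ univ := by
  constructor
  · rw [Finset.nonempty_iff_ne_empty]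
    intro hS
    have hdir : ∀ i : Fin n, O.dir (i + 1) i := by
      intro i
      rcases (O.consistent i (i + 1)).mp (adj_succ hn i) with h | h
      · exfalso
        have : i ∈ SOf O := mem_SOf.mpr h
        rw [hS] at this
        exact absurd this (Finset.notMem_empty i)
      · exact h
    have key : ∀ m : ℕ, Relation.TransGen O.dir ((m + 1 : ℕ) : Fin n) 0 := by
      intro m
      induction m with
      | zero =>
        apply Relation.TransGen.single
        rw [show ((0 + 1 : ℕ) : Fin n) = (0 : Fin n) + 1 by push_cast; ring]
        exact hdir 0
      | succ m ih =>
        refine Relation.TransGen.head ?_ ih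
        have := hdir ((m + 1 : ℕ) : Fin n)
        rwa [show ((m + 1 + 1 : ℕ) : Fin n) = ((m + 1 : ℕ) : Fin n) + 1 by push_cast; ring]
    have h0 : ((n - 1 + 1 : ℕ) : Fin n) = 0 := by
      rw [show n - 1 + 1 = n by omega, Fin.natCast_eq_zero]
    exact hO 0 (h0 ▸ key (n - 1))
  · intro hS
    have hdir : ∀ i : Fin n, O.dir i (i + 1) := by
      intro i
      have : i ∈ SOf O := hS ▸ Finset.mem_univ i
      exact mem_SOf.mp this
    have key : ∀ m : ℕ, Relation.TransGen O.dir 0 ((m + 1 : ℕ) : Fin n) := by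
      intro m
      induction m with
      | zero =>
        apply Relation.TransGen.single
        rw [show ((0 + 1 : ℕ) : Fin n) = (0 : Fin n) + 1 by push_cast; ring]
        exact hdir 0
      | succ m ih =>
        refine Relation.TransGen.tail ih ?_
        have := hdir ((m + 1 : ℕ) : Fin n)
        rwa [show ((m + 1 + 1 : ℕ) : Fin n) = ((m + 1 : ℕ) : Fin n) + 1 by push_cast; ring]
    have h0 : ((n - 1 + 1 : ℕ) : Fin n) = 0 := by
      rw [show n - 1 + 1 = n by omega, Fin.natCast_eq_zero]
    exact hO 0 (h0 ▸ key (n - 1))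

/-- The result of clicking at a source `v`. -/
def clickAt {V : Type*} {G : SimpleGraph V} (O : GraphOrientation G) (v : V)
    (hv : ∀ u, ¬ O.dir u v) : GraphOrientation G where
  dir u w := ((u = v ∨ w = v) ∧ O.dir w u) ∨ (u ≠ v ∧ w ≠ v ∧ O.dir u w)
  consistent u w := by
    rw [O.consistent u w]
    by_cases hu : u = v <;> by_cases hw : w = v
    · have h1 : ¬ O.dir w u := by rw [hu]; exact hv w
      have h2 : ¬ O.dir u w := by rw [hw]; exact hv u
      tauto
    · have h1 : ¬ O.dir w u := by rw [hu]; exact hv w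
      tauto
    · have h2 : ¬ O.dir u w := by rw [hw]; exact hv u
      tauto
    · tauto
  asymm u w h h' := by
    have a1 := O.asymm u w
    have a2 := O.asymm w u
    tauto

lemma click_clickAt {V : Type*} {G : SimpleGraph V} (O : GraphOrientation G) (v : V)
    (hv : ∀ u, ¬ O.dir u v) : Click O (clickAt O v hv) :=
  ⟨v, hv, fun _ _ => Iff.rfl⟩

lemma sub_one_ne_self (hn : 3 ≤ n) (v : Fin n) : v - 1 ≠ v := by
  intro h
  exact fin_one_ne_zero hn (by linear_combination -(h : v - 1 = v))

lemma sub_one_add_one (v : Fin n) : v - 1 + 1 = v := by ring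

lemma val_sub_one (hn : 3 ≤ n) (u : Fin n) (h : u ≠ 0) : (u - 1).val = u.val - 1 := by
  rw [Fin.sub_def]
  have h1 : ((1 : Fin n)).val = 1 := by rw [Fin.val_one', Nat.mod_eq_of_lt (by omega)]
  have hu : u.val ≠ 0 := fun hh => h (Fin.ext (by simp [hh]))
  have hun : u.val < n := u.isLt
  simp only [h1]
  rw [Nat.mod_eq_sub_mod (by omega), Nat.mod_eq_of_lt (by omega)]
  omega

/-- The effect of a click on the clockwise-edge set. -/
lemma SOf_click (hn : 3 ≤ n) {O O' : GraphOrientation (cycleGraph n)} (v : Fin n)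
    (hv : ∀ u, ¬ O.dir u v)
    (hf : ∀ u w, O'.dir u w ↔ (((u = v ∨ w = v) ∧ O.dir w u) ∨ (u ≠ v ∧ w ≠ v ∧ O.dir u w))) :
    v ∈ SOf O ∧ v - 1 ∉ SOf O ∧ SOf O' = insert (v - 1) ((SOf O).erase v) := by
  have hvS : v ∈ SOf O := by
    rw [mem_SOf]
    rcases (O.consistent v (v + 1)).mp (adj_succ hn v) with h | h
    · exact h
    · exact absurd h (hv (v + 1))
  have hv1S : v - 1 ∉ SOf O := by
    rw [mem_SOf, sub_one_add_one]
    exact hv (v - 1)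
  refine ⟨hvS, hv1S, ?_⟩
  ext i
  rw [mem_SOf, hf]
  by_cases hiv : i = v
  · subst hiv
    simp only [Finset.mem_insert, Finset.mem_erase]
    constructor
    · rintro (⟨-, hd⟩ | ⟨h, -⟩)
      · exact absurd hd (hv (i + 1))
      · exact absurd rfl h
    · rintro (h | ⟨h, -⟩)
      · exact absurd h.symm (sub_one_ne_self hn i)
      · exact absurd rfl h
  · by_cases hiv1 : i + 1 = v
    · have hi : i = v - 1 := by linear_combination hiv1
      have hdvi : O.dir v i := by
        have hadj : (cycleGraph n).Adj i v := hiv1 ▸ adj_succ hn i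
        rcases (O.consistent i v).mp hadj with h | h
        · exact absurd h (hv i)
        · exact h
      simp only [Finset.mem_insert, Finset.mem_erase]
      constructor
      · intro _
        exact Or.inl hi
      · intro _
        exact Or.inl ⟨Or.inr hiv1, hiv1 ▸ hdvi⟩
    · have hi1 : i ≠ v - 1 := fun h => hiv1 (by rw [h, sub_one_add_one])
      simp only [Finset.mem_insert, Finset.mem_erase, mem_SOf]
      constructor
      · rintro (⟨hc, -⟩ | ⟨-, -, hd⟩)
        · rcases hc with h | h
          · exact absurd h hiv
          · exact absurd h hiv1
        · exact Or.inr ⟨hiv, hd⟩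
      · rintro (h | ⟨-, hd⟩)
        · exact absurd h hi1
        · exact Or.inr ⟨hiv, hiv1, hd⟩

lemma card_SOf_click (hn : 3 ≤ n) {O O' : GraphOrientation (cycleGraph n)}
    (h : Click O O') : (SOf O').card = (SOf O).card := by
  obtain ⟨v, hv, hf⟩ := h
  obtain ⟨hvS, hv1S, hS⟩ := SOf_click hn v hv hf
  rw [hS, Finset.card_insert_of_notMem (fun hm => hv1S (Finset.mem_of_mem_erase hm)),
    Finset.card_erase_of_mem hvS]
  have : 0 < (SOf O).card := Finset.card_pos.mpr ⟨v, hvS⟩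
  omega

/-- The canonical set: the first `m` positions. -/
def canon (n m : ℕ) : Finset (Fin n) := Finset.filter (fun i => i.val < m) Finset.univ

omit [NeZero n] in
lemma mem_canon {m : ℕ} {i : Fin n} : i ∈ canon n m ↔ i.val < m := by
  simp [canon]

omit [NeZero n] in
lemma card_canon (m : ℕ) (hm : m ≤ n) : (canon n m).card = m := by
  have : (canon n m).card = (Finset.range m).card :=
    Finset.card_bij' (fun a _ => a.val)
      (fun b hb => (⟨b, lt_of_lt_of_le (Finset.mem_range.mp hb) hm⟩ : Fin n))
      (fun a ha => Finset.mem_range.mpr (mem_canon.mp ha))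
      (fun b hb => mem_canon.mpr (Finset.mem_range.mp hb))
      (fun a _ => rfl) (fun b _ => rfl)
  rw [this, Finset.card_range]

lemma canon_nonempty (hn : 3 ≤ n) {m : ℕ} (hm : 0 < m) : (canon n m).Nonempty :=
  ⟨0, mem_canon.mpr (by rw [Fin.val_zero]; omega)⟩

omit [NeZero n] in
lemma ne_univ_of_card_lt {S : Finset (Fin n)} (h : S.card < n) : S ≠ univ := by
  intro hS
  rw [hS, Finset.card_univ, Fintype.card_fin] at h
  omega

omit [NeZero n] in
lemma card_lt_of_ne_univ {S : Finset (Fin n)} (h : S ≠ univ) : S.card < n := by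
  rcases lt_or_eq_of_le (Finset.card_le_univ S) with hlt | heq
  · simpa using hlt
  · exact absurd (Finset.eq_univ_of_card S (by simpa using heq)) h

omit [NeZero n] in
lemma canon_ne_univ {m : ℕ} (hm : m < n) : canon n m ≠ univ :=
  ne_univ_of_card_lt (by rw [card_canon m (by omega)]; exact hm)

/-- A predecessor-closed set is the canonical set of its cardinality. -/
lemma downward_closed_eq_canon (hn : 3 ≤ n) (S : Finset (Fin n))
    (h : ∀ v ∈ S, v ≠ 0 → v - 1 ∈ S) : S = canon n S.card := by
  have aux : ∀ m : ℕ, ∀ v : Fin n, v ∈ S → m ≤ v.val →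
      (⟨v.val - m, by omega⟩ : Fin n) ∈ S := by
    intro m
    induction m with
    | zero =>
      intro v hv _
      simpa using hv
    | succ m ih =>
      intro v hv hm
      have hu := ih v hv (by omega)
      set u : Fin n := ⟨v.val - m, by omega⟩ with hu_def
      have hune : u ≠ 0 := by
        intro h0
        have := congrArg Fin.val h0
        simp only [hu_def, Fin.val_zero] at this
        omega
      have hmem := h u hu hune
      have : u - 1 = (⟨v.val - (m + 1), by omega⟩ : Fin n) := by
        apply Fin.ext
        rw [val_sub_one hn u hune]
        simp only [hu_def]
        omega
      rwa [this] at hmem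
  have hdc : ∀ v ∈ S, ∀ w : Fin n, w.val ≤ v.val → w ∈ S := by
    intro v hv w hw
    have := aux (v.val - w.val) v hv (by omega)
    have hww : (⟨v.val - (v.val - w.val), by omega⟩ : Fin n) = w := Fin.ext (by simp; omega)
    rwa [hww] at this
  ext i
  rw [mem_canon]
  constructor
  · intro hi
    have hsub : canon n (i.val + 1) ⊆ S := by
      intro j hj
      exact hdc i hi j (by have := mem_canon.mp hj; omega)
    have := Finset.card_le_card hsub
    rw [card_canon (i.val + 1) (by have := i.isLt; omega)] at this
    omega
  · intro hi
    by_contra hiS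
    have hsub : S ⊆ canon n i.val := by
      intro j hj
      rw [mem_canon]
      by_contra hji
      exact hiS (hdc j hj i (by omega))
    have := Finset.card_le_card hsub
    rw [card_canon i.val (by have := i.isLt; omega)] at this
    omega

lemma exists_move (hn : 3 ≤ n) (S : Finset (Fin n)) (hne : S ≠ canon n S.card) :
    ∃ v ∈ S, v ≠ 0 ∧ v - 1 ∉ S := by
  by_contra hc
  push_neg at hc
  exact hne (downward_closed_eq_canon hn S (fun v hv h0 => hc v hv h0))

lemma source_ofS (hn : 3 ≤ n) (S : Finset (Fin n)) {v : Fin n} (hvS : v ∈ S)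
    (hv1 : v - 1 ∉ S) : ∀ u, ¬ (ofS hn S).dir u v := by
  rintro u (⟨h1, h2⟩ | ⟨h1, h2⟩)
  · have : u = v - 1 := by linear_combination -h1
    exact hv1 (this ▸ h2)
  · exact h2 hvS

/-- The relation whose quotient defines kappa. -/
abbrev rel (n : ℕ) : AcycGraphOrientation (cycleGraph n) → AcycGraphOrientation (cycleGraph n) → Prop :=
  fun A B => Click A.1 B.1

lemma canon_reach (hn : 3 ≤ n) (N : ℕ) :
    ∀ (S : Finset (Fin n)) (hsum : ∑ v ∈ S, v.val ≤ N) (h1 : S.Nonempty) (h2 : S ≠ univ),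
    Quot.mk (rel n) ⟨ofS hn S, acyclic_ofS hn S h1 h2⟩ =
    Quot.mk (rel n) ⟨ofS hn (canon n S.card),
      acyclic_ofS hn _ (canon_nonempty hn (Finset.card_pos.mpr h1))
        (canon_ne_univ (card_lt_of_ne_univ h2))⟩ := by
  induction N using Nat.strong_induction_on with
  | _ N IH =>
    intro S hsum h1 h2
    by_cases hS : S = canon n S.card
    · have : ofS hn S = ofS hn (canon n S.card) := by rw [← hS]
      exact congrArg _ (Subtype.ext this)
    · obtain ⟨v, hvS, hv0, hv1⟩ := exists_move hn S hS
      set S' : Finset (Fin n) := insert (v - 1) (S.erase v) with hS'def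
      -- the click step
      have hsrc := source_ofS hn S hvS hv1
      have hstep : Click (ofS hn S) (clickAt (ofS hn S) v hsrc) := click_clickAt _ v hsrc
      obtain ⟨hvS2, hv1S2, hSOf⟩ :=
        SOf_click (O' := clickAt (ofS hn S) v hsrc) hn v hsrc (fun u w => Iff.rfl)
      rw [SOf_ofS] at hvS2 hv1S2 hSOf
      -- identify the clicked orientation with `ofS hn S'`
      have hclick_eq : clickAt (ofS hn S) v hsrc = ofS hn S' := by
        rw [eq_ofS_SOf hn (clickAt (ofS hn S) v hsrc), hSOf]
      have hcard' : S'.card = S.card := by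
        rw [hS'def, Finset.card_insert_of_notMem (fun hm => hv1 (Finset.mem_of_mem_erase hm)),
          Finset.card_erase_of_mem hvS]
        have : 0 < S.card := Finset.card_pos.mpr ⟨v, hvS⟩
        omega
      have h1' : S'.Nonempty := Finset.insert_nonempty _ _
      have h2' : S' ≠ univ := ne_univ_of_card_lt (by rw [hcard']; exact card_lt_of_ne_univ h2)
      have hvval : 1 ≤ v.val := by
        have : v.val ≠ 0 := fun h0 => hv0 (Fin.ext (by simp [h0]))
        omega
      have hsum_erase : (∑ w ∈ S.erase v, w.val) + v.val = ∑ w ∈ S, w.val :=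
        Finset.sum_erase_add S _ hvS
      have hsum' : ∑ w ∈ S', w.val = (∑ w ∈ S, w.val) - 1 := by
        rw [hS'def, Finset.sum_insert (fun hm => hv1 (Finset.mem_of_mem_erase hm)),
          val_sub_one hn v hv0]
        omega
      have hsum_pos : 1 ≤ ∑ w ∈ S, w.val := by
        calc 1 ≤ v.val := hvval
        _ ≤ ∑ w ∈ S, w.val :=
          Finset.single_le_sum (f := fun w : Fin n => w.val) (fun _ _ => Nat.zero_le _) hvS
      have hN : 1 ≤ N := le_trans hsum_pos hsum
      have hrel : rel n ⟨ofS hn S, acyclic_ofS hn S h1 h2⟩ ⟨ofS hn S', acyclic_ofS hn S' h1' h2'⟩ := by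
        show Click (ofS hn S) (ofS hn S')
        rw [← hclick_eq]
        exact hstep
      have hstep_eq := Quot.sound hrel
      have hrest := IH (N - 1) (by omega) S' (by omega) h1' h2'
      refine hstep_eq.trans (hrest.trans ?_)
      have : ofS hn (canon n S'.card) = ofS hn (canon n S.card) := by rw [hcard']
      exact congrArg _ (Subtype.ext this)

end KappaCycleAux

open KappaCycleAux in
theorem kappa_cycle_graph (n : ℕ) (hn : 3 ≤ n) :
    kappa (SimpleGraph.cycleGraph n) = n - 1 := by
  haveI : NeZero n := ⟨by omega⟩
  have hcount : ∀ A B, rel n A B → (SOf A.1).card = (SOf B.1).card :=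
    fun A B h => (card_SOf_click hn h).symm
  let F : Quot (rel n) → ℕ := Quot.lift (fun A => (SOf A.1).card) hcount
  let g : Fin (n - 1) → Quot (rel n) := fun k =>
    Quot.mk _ ⟨ofS hn (canon n (k.val + 1)),
      acyclic_ofS hn _ (canon_nonempty hn (Nat.succ_pos _))
        (canon_ne_univ (by omega))⟩
  have hF : ∀ k : Fin (n - 1), F (g k) = k.val + 1 := by
    intro k
    show (SOf _).card = _
    rw [SOf_ofS, card_canon _ (by omega)]
  have hinj : Function.Injective g := by
    intro k k' h
    have h2 := congrArg F h
    rw [hF, hF] at h2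
    exact Fin.ext (by omega)
  have hsurj : Function.Surjective g := by
    intro q
    induction q using Quot.ind with
    | _ A =>
    obtain ⟨O, hO⟩ := A
    obtain ⟨hne, hnu⟩ := acyclic_nontrivial hn O hO
    set S := SOf O with hSdef
    have hc1 : 0 < S.card := Finset.card_pos.mpr hne
    have hc2 : S.card < n := card_lt_of_ne_univ hnu
    refine ⟨⟨S.card - 1, by omega⟩, ?_⟩
    have hOS : O = ofS hn S := eq_ofS_SOf hn O
    have key := canon_reach hn (∑ w ∈ S, w.val) S le_rfl hne hnu
    have hcanon : canon n (S.card - 1 + 1) = canon n S.card := by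
      congr 1
      omega
    have e1 : Quot.mk (rel n) ⟨O, hO⟩ =
        Quot.mk (rel n) ⟨ofS hn S, acyclic_ofS hn S hne hnu⟩ :=
      congrArg _ (Subtype.ext hOS)
    show Quot.mk (rel n) _ = Quot.mk (rel n) ⟨O, hO⟩
    rw [e1, key]
    exact congrArg _ (Subtype.ext (show ofS hn (canon n (S.card - 1 + 1)) =
      ofS hn (canon n S.card) from congrArg _ hcanon))
  show Nat.card (Quot (rel n)) = n - 1
  rw [Nat.card_congr (Equiv.ofBijective g ⟨hinj, hsurj⟩).symm, Nat.card_eq_fintype_card,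
    Fintype.card_fin]
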